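/- For any reflection sr^l in the dihedral group acting on words of length n over a k-letter alphabet, the number of fixed words is k^{n/2} if n is even and l is odd, k^{n/2+1} if n and l are both even, and k^{(n+1)/2} if n is odd. Summing over all n reflections gives n·((k+1)/2)·k^{n/2} fixed words when n is even and n·k^{(n+1)/2} when n is odd. -/

import Mathlib

open Finset
open Fin.NatCast

variable {n : ℕ}

private def refRel [NeZero n] (l : Fin n) : Setoid (Fin n) :=
  ⟨fun i j => j = i ∨ j = l - i, by
    refine ⟨fun i => Or.inl rfl, ?_, ?_⟩
    · rintro i j (rfl | rfl)
      · exact Or.inl rfl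
      · exact Or.inr (sub_sub_cancel l i).symm
    · rintro i j m (rfl | rfl) (rfl | rfl)
      · exact Or.inl rfl
      · exact Or.inr rfl
      · exact Or.inr rfl
      · rw [sub_sub_cancel]; exact Or.inl rfl⟩

private instance [NeZero n] (l : Fin n) : DecidableRel (refRel l).r :=
  fun _ _ => inferInstanceAs (Decidable (_ ∨ _))

private def wordEquiv (k : ℕ) [NeZero n] (l : Fin n) :
    {w : Fin n → Fin k // ∀ i : Fin n, w i = w (l - i)} ≃ (Quotient (refRel l) → Fin k) where
  toFun w := Quotient.lift w.1 (fun a b hab => by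
    rcases hab with h | h
    · rw [h]
    · rw [h]; exact w.2 a)
  invFun f := ⟨fun i => f ⟦i⟧, fun i => congrArg f (Quotient.sound (Or.inr rfl))⟩
  left_inv w := rfl
  right_inv f := funext fun q => Quotient.inductionOn q fun _ => rfl
private instance [NeZero n] (l : Fin n) :
    DecidableRel fun (i j : Fin n) => @HasEquiv.Equiv _ (@instHasEquivOfSetoid _ (refRel l)) i j :=
  fun _ _ => inferInstanceAs (Decidable (_ ∨ _))

private instance [NeZero n] (l : Fin n) : Fintype (Quotient (refRel l)) :=
  Quotient.fintype _

private lemma two_mul_card_quot [NeZero n] (l : Fin n) :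
    2 * Fintype.card (Quotient (refRel l)) =
      n + (univ.filter fun i : Fin n => l - i = i).card := by
  classical
  have h := Finset.sum_fiberwise (univ : Finset (Fin n)) (Quotient.mk (refRel l))
      (fun i => if l - i = i then 2 else 1)
  have inner : ∀ q : Quotient (refRel l),
      ∑ i ∈ univ.filter (fun i => Quotient.mk (refRel l) i = q),
        (if l - i = i then 2 else 1) = 2 := by
    intro q
    induction q using Quotient.inductionOn with
    | h j =>
      have hfib : univ.filter (fun i => Quotient.mk (refRel l) i = Quotient.mk (refRel l) j)
          = {j, l - j} := by
        ext i
        simp only [mem_filter, mem_univ, true_and, mem_insert, mem_singleton, Quotient.eq]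
        show (j = i ∨ j = l - i) ↔ _
        constructor
        · rintro (rfl | rfl)
          · exact Or.inl rfl
          · exact Or.inr (sub_sub_cancel l i).symm
        · rintro (rfl | rfl)
          · exact Or.inl rfl
          · exact Or.inr (sub_sub_cancel l j).symm
      rw [hfib]
      by_cases hj : l - j = j
      · have : ({j, l - j} : Finset (Fin n)) = {j} := by rw [hj]; simp
        rw [this, sum_singleton, if_pos hj]
      · rw [Finset.sum_pair (fun h => hj h.symm)]
        rw [if_neg hj, if_neg (by rw [sub_sub_cancel]; exact fun h => hj h.symm)]
  rw [Finset.sum_congr rfl (fun q _ => inner q), sum_const, card_univ, smul_eq_mul,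
    mul_comm] at h
  rw [h, Finset.sum_ite, sum_const, sum_const, smul_eq_mul, smul_eq_mul]
  have := Finset.card_filter_add_card_filter_not
    (s := (univ : Finset (Fin n))) (p := fun i : Fin n => l - i = i)
  rw [card_univ, Fintype.card_fin] at this
  omega

private lemma mod_two_char {a r : ℕ} (_hn : 0 < n) (ha : a < n) (hr : r < n) :
    (a + a) % n = r ↔ (a + a = r ∨ a + a = n + r) := by
  constructor
  · intro h
    by_cases hc : a + a < n
    · rw [Nat.mod_eq_of_lt hc] at h; omega
    · rw [Nat.mod_eq_sub_mod (by omega), Nat.mod_eq_of_lt (by omega)] at h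
      omega
  · rintro (h | h)
    · rw [h, Nat.mod_eq_of_lt hr]
    · rw [h, Nat.add_mod_left, Nat.mod_eq_of_lt hr]

private lemma fix_iff [NeZero n] (l i : Fin n) :
    l - i = i ↔ (i.val + i.val) % n = l.val := by
  rw [sub_eq_iff_eq_add, Fin.ext_iff, Fin.val_add, eq_comm]

private lemma card_F [NeZero n] (l : Fin n) :
    (univ.filter fun i : Fin n => l - i = i).card =
      if Even n then (if Even l.val then 2 else 0) else 1 := by
  have hn : 0 < n := Nat.pos_of_ne_zero (NeZero.ne n)
  have hl : l.val < n := l.isLt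
  have hiff : ∀ i : Fin n, (l - i = i) ↔
      (i.val + i.val = l.val ∨ i.val + i.val = n + l.val) := fun i => by
    rw [fix_iff, mod_two_char hn i.isLt hl]
  rcases Nat.even_or_odd n with ⟨m, hm⟩ | ⟨m, hm⟩
  · -- n even
    rcases Nat.even_or_odd l.val with ⟨b, hb⟩ | ⟨b, hb⟩
    · -- l even : two solutions b, b + m
      have hfil : (univ.filter fun i : Fin n => l - i = i)
          = {⟨b, by omega⟩, ⟨b + m, by omega⟩} := by
        ext i
        simp only [mem_filter, mem_univ, true_and, mem_insert, mem_singleton, hiff,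
          Fin.ext_iff, Fin.val_mk]
        have := i.isLt
        omega
      rw [hfil, if_pos ⟨m, hm⟩, if_pos ⟨b, hb⟩]
      rw [Finset.card_pair (by simp only [ne_eq, Fin.ext_iff, Fin.val_mk]; omega)]
    · have hfil : (univ.filter fun i : Fin n => l - i = i) = ∅ := by
        ext i
        simp only [mem_filter, mem_univ, true_and, notMem_empty, iff_false, hiff]
        have := i.isLt
        omega
      rw [hfil, if_pos ⟨m, hm⟩, if_neg (by simp [Nat.even_iff]; omega), card_empty]
  · -- n odd
    have hne : ¬ Even n := by simp [Nat.even_iff]; omega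
    rcases Nat.even_or_odd l.val with ⟨b, hb⟩ | ⟨b, hb⟩
    · have hfil : (univ.filter fun i : Fin n => l - i = i) = {⟨b, by omega⟩} := by
        ext i
        simp only [mem_filter, mem_univ, true_and, mem_singleton, hiff, Fin.ext_iff,
          Fin.val_mk]
        have := i.isLt
        omega
      rw [hfil, if_neg hne, card_singleton]
    · have hfil : (univ.filter fun i : Fin n => l - i = i) = {⟨b + m + 1, by omega⟩} := by
        ext i
        simp only [mem_filter, mem_univ, true_and, mem_singleton, hiff, Fin.ext_iff,
          Fin.val_mk]
        have := i.isLt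
        omega
      rw [hfil, if_neg hne, card_singleton]

private lemma evens_card (n : ℕ) :
    ((Finset.range n).filter (fun l => Even l)).card = (n + 1) / 2 := by
  induction n with
  | zero => simp
  | succ m ih =>
    rw [Finset.range_add_one, Finset.filter_insert]
    by_cases hm : Even m
    · rw [if_pos hm, Finset.card_insert_of_notMem (by simp)]
      have := Nat.even_iff.mp hm
      omega
    · rw [if_neg hm]
      have := Nat.odd_iff.mp (Nat.not_even_iff_odd.mp hm)
      omega

private lemma key (k : ℕ) [NeZero n] (l : Fin n) :
    Nat.card {w : Fin n → Fin k // ∀ i : Fin n, w i = w (l - i)} =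
      k ^ Fintype.card (Quotient (refRel l)) := by
  rw [Nat.card_congr (wordEquiv k l), Nat.card_eq_fintype_card, Fintype.card_fun,
    Fintype.card_fin]

private lemma part1 (n k : ℕ) [NeZero n] (l : Fin n) :
    Nat.card {w : Fin n → Fin k // ∀ i : Fin n, w i = w (l - i)} =
      if Even n then (if Even l.val then k ^ (n / 2 + 1) else k ^ (n / 2))
      else k ^ ((n + 1) / 2) := by
  have h2 := two_mul_card_quot l
  rw [card_F] at h2
  rw [key]
  by_cases hn : Even n
  · rw [if_pos hn] at h2 ⊢
    have hn' := Nat.even_iff.mp hn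
    by_cases hl : Even l.val
    · rw [if_pos hl] at h2 ⊢
      congr 1; omega
    · rw [if_neg hl] at h2 ⊢
      congr 1; omega
  · rw [if_neg hn] at h2 ⊢
    have hn' := Nat.odd_iff.mp (Nat.not_even_iff_odd.mp hn)
    congr 1; omega

theorem reflection_fixed_words (n k : ℕ) [NeZero n] :
    (∀ l : Fin n,
      Nat.card {w : Fin n → Fin k // ∀ i : Fin n, w i = w (l - i)} =
        if Even n then (if Even l.val then k ^ (n / 2 + 1) else k ^ (n / 2))
        else k ^ ((n + 1) / 2)) ∧
    (Even n →
      2 * ∑ l ∈ Finset.range n,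
          Nat.card {w : Fin n → Fin k // ∀ i : Fin n, w i = w ((l : Fin n) - i)}
        = n * (k + 1) * k ^ (n / 2)) ∧
    (¬ Even n →
      ∑ l ∈ Finset.range n,
          Nat.card {w : Fin n → Fin k // ∀ i : Fin n, w i = w ((l : Fin n) - i)}
        = n * k ^ ((n + 1) / 2)) := by
  refine ⟨fun l => part1 n k l, ?_, ?_⟩
  · intro hn
    obtain ⟨m, hm⟩ := hn
    have hsum : ∑ l ∈ Finset.range n,
        Nat.card {w : Fin n → Fin k // ∀ i : Fin n, w i = w ((l : Fin n) - i)}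
        = ∑ l ∈ Finset.range n, (if Even l then k ^ (n / 2 + 1) else k ^ (n / 2)) := by
      refine Finset.sum_congr rfl fun l hl => ?_
      rw [part1, if_pos ⟨m, hm⟩, Fin.val_cast_of_lt (Finset.mem_range.mp hl)]
    rw [hsum, Finset.sum_ite, Finset.sum_const, Finset.sum_const, smul_eq_mul, smul_eq_mul,
      evens_card]
    have hcards := Finset.card_filter_add_card_filter_not
      (s := Finset.range n) (p := fun l => Even l)
    rw [evens_card, Finset.card_range] at hcards
    clear hsum
    have hE : (n + 1) / 2 = m := by omega
    have hO : ((Finset.range n).filter (fun l => ¬ Even l)).card = m := by omega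
    rw [hE, hO]
    have hhalf : n / 2 = m := by omega
    rw [hhalf, hm, pow_succ]
    ring
  · intro hn
    have hsum : ∑ l ∈ Finset.range n,
        Nat.card {w : Fin n → Fin k // ∀ i : Fin n, w i = w ((l : Fin n) - i)}
        = ∑ _l ∈ Finset.range n, k ^ ((n + 1) / 2) := by
      refine Finset.sum_congr rfl fun l _ => ?_
      rw [part1, if_neg hn]
    rw [hsum, Finset.sum_const, Finset.card_range, smul_eq_mul]
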